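/- (Dynamic regret of adaptive OGD) Let X ⊆ R^d be closed convex with diameter D, f_1,…,f_T : X → R convex, and let x_{t+1} = Proj_X(x_t − η_t ∇f_t(x_t)) with η_t = (D+1)√(1+P)/√(2 Σ_{τ=1}^t ‖∇f_τ(x_τ)‖²). Then for any comparator sequence u_1,…,u_T ∈ X with path length Σ_{t=1}^{T−1} ‖u_{t+1} − u_t‖ ≤ P, Σ_{t=1}^T (f_t(x_t) − f_t(u_t)) ≤ (D+1)√(2(1+P))·√(Σ_{t=1}^T ‖∇f_t(x_t)‖²). -/

import Mathlib

open Finset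
open scoped RealInnerProductSpace

lemma my_sum_div_sqrt {a : ℕ → ℝ} (ha : ∀ t, 0 < a t) (n : ℕ) :
    ∑ t ∈ range n, a t / Real.sqrt (∑ τ ∈ range (t+1), a τ) ≤
      2 * Real.sqrt (∑ t ∈ range n, a t) := by
  induction n with
  | zero => simp
  | succ n ih =>
    rw [Finset.sum_range_succ, Finset.sum_range_succ (f := a)]
    have hs : (0:ℝ) ≤ ∑ t ∈ range n, a t := Finset.sum_nonneg fun t _ => (ha t).le
    set s := ∑ t ∈ range n, a t with hs_def
    have key : a n / Real.sqrt (s + a n) ≤ 2 * Real.sqrt (s + a n) - 2 * Real.sqrt s := by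
      have h1 : Real.sqrt s ≤ Real.sqrt (s + a n) := Real.sqrt_le_sqrt (by linarith [(ha n).le])
      have h2 : 0 < Real.sqrt (s + a n) := Real.sqrt_pos.2 (by linarith [ha n])
      rw [div_le_iff₀ h2]
      have e : (2 * Real.sqrt (s + a n) - 2 * Real.sqrt s) * Real.sqrt (s + a n)
          = 2 * (s + a n) - 2 * (Real.sqrt s * Real.sqrt (s + a n)) := by
        have := Real.mul_self_sqrt (show (0:ℝ) ≤ s + a n by linarith [ha n])
        nlinarith [this]
      rw [e]
      have h3 : Real.sqrt s * Real.sqrt s ≤ Real.sqrt s * Real.sqrt (s + a n) :=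
        mul_le_mul_of_nonneg_left h1 (Real.sqrt_nonneg s)
      rw [Real.mul_self_sqrt hs] at h3
      nlinarith [sq_nonneg (Real.sqrt (s + a n) - Real.sqrt s),
        Real.sq_sqrt hs, Real.sq_sqrt (show (0:ℝ) ≤ s + a n by linarith [ha n]), ha n]
    linarith [ih]

lemma my_abel {A c : ℕ → ℝ} {M : ℝ}
    (hA0 : ∀ t, 0 ≤ A t) (hAM : ∀ t, A t ≤ M)
    (hc0 : ∀ t, 0 ≤ c t) (hcmono : ∀ s t, s ≤ t → c s ≤ c t) :
    ∀ n, ∑ t ∈ range (n+1), c t * (A t - A (t+1)) ≤ M * c n := by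
  have key : ∀ n, ∑ t ∈ range (n+1), c t * (A t - A (t+1)) + c n * A (n+1) ≤ M * c n := by
    intro n
    induction n with
    | zero =>
      rw [Finset.sum_range_one]
      nlinarith [hA0 0, hAM 0, hc0 0]
    | succ n ih =>
      rw [Finset.sum_range_succ]
      have h1 : c n ≤ c (n+1) := hcmono n (n+1) (by omega)
      nlinarith [hAM (n+1), hA0 (n+1), mul_le_mul_of_nonneg_left (hAM (n+1)) (sub_nonneg.2 h1)]
  intro n
  have := key n
  nlinarith [mul_nonneg (hc0 n) (hA0 (n+1))]

lemma my_proj_inner {d : ℕ} {X : Set (EuclideanSpace ℝ (Fin d))}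
    (hXconv : Convex ℝ X) {y p : EuclideanSpace ℝ (Fin d)} (hp : p ∈ X)
    (hmin : ∀ z ∈ X, ‖y - p‖ ≤ ‖y - z‖) :
    ∀ z ∈ X, ⟪y - p, z - p⟫ ≤ 0 := by
  haveI : Nonempty X := ⟨⟨p, hp⟩⟩
  have heq : ‖y - p‖ = ⨅ w : X, ‖y - w‖ := by
    refine le_antisymm (le_ciInf fun w => hmin w w.2) ?_
    exact ciInf_le ⟨0, by rintro r ⟨w, rfl⟩; positivity⟩ (⟨p, hp⟩ : X)
  exact (norm_eq_iInf_iff_real_inner_le_zero hXconv hp).1 heq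

set_option maxHeartbeats 1000000 in
theorem stmt14 {d : ℕ} (T : ℕ) (X : Set (EuclideanSpace ℝ (Fin d)))
    (hXcl : IsClosed X) (hXconv : Convex ℝ X)
    (D : ℝ) (hD : 0 ≤ D) (hdiam : ∀ a ∈ X, ∀ b ∈ X, ‖a - b‖ ≤ D)
    (f : ℕ → EuclideanSpace ℝ (Fin d) → ℝ)
    (hfconv : ∀ t, ConvexOn ℝ X (f t))
    (x u : ℕ → EuclideanSpace ℝ (Fin d))
    (hx : ∀ t, x t ∈ X) (hu : ∀ t, u t ∈ X)
    (grad : ℕ → EuclideanSpace ℝ (Fin d))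
    (hgradne : ∀ t, grad t ≠ 0)
    (hsubgrad : ∀ t, ∀ y ∈ X, f t (x t) + ⟪grad t, y - x t⟫ ≤ f t y)
    (P : ℝ) (hP : 0 ≤ P)
    (hpath : ∑ t ∈ Finset.range (T - 1), ‖u (t + 1) - u t‖ ≤ P)
    (η : ℕ → ℝ)
    (hη : ∀ t, η t = (D + 1) * Real.sqrt (1 + P) /
        Real.sqrt (2 * ∑ τ ∈ Finset.range (t + 1), ‖grad τ‖ ^ 2))
    (hupdate : ∀ t, x (t + 1) ∈ X ∧
        ∀ z ∈ X, ‖(x t - η t • grad t) - x (t + 1)‖ ≤ ‖(x t - η t • grad t) - z‖) :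
    ∑ t ∈ Finset.range T, (f t (x t) - f t (u t)) ≤
      (D + 1) * Real.sqrt (2 * (1 + P)) *
        Real.sqrt (∑ t ∈ Finset.range T, ‖grad t‖ ^ 2) := by
  rcases Nat.eq_zero_or_pos T with rfl | hT
  · simp
  have hT1 : T - 1 + 1 = T := Nat.succ_pred_eq_of_pos hT
  -- basic quantities
  set G : ℕ → ℝ := fun t => ‖grad t‖ ^ 2 with hG_def
  have hGpos : ∀ t, 0 < G t := fun t => by
    rw [hG_def]
    exact pow_pos (norm_pos_iff.2 (hgradne t)) 2
  set S : ℕ → ℝ := fun t => ∑ τ ∈ range (t + 1), G τ with hS_def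
  have hSpos : ∀ t, 0 < S t := fun t =>
    Finset.sum_pos (fun τ _ => hGpos τ) ⟨0, Finset.mem_range.2 (Nat.succ_pos t)⟩
  have hSmono : ∀ s t : ℕ, s ≤ t → S s ≤ S t := by
    intro s t hst
    exact Finset.sum_le_sum_of_subset_of_nonneg
      (Finset.range_subset_range.2 (by omega)) (fun τ _ _ => (hGpos τ).le)
  set Q : ℝ := Real.sqrt (1 + P) with hQ_def
  have hQ1 : 1 ≤ Q := by
    have h1 : Q ^ 2 = 1 + P := Real.sq_sqrt (by linarith)
    have h2 : 0 ≤ Q := Real.sqrt_nonneg _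
    nlinarith
  have hQ2 : Q ^ 2 = 1 + P := Real.sq_sqrt (by linarith)
  set K : ℝ := (D + 1) * Q with hK_def
  have hK : 0 < K := by rw [hK_def]; exact mul_pos (by linarith) (by linarith)
  have hηval : ∀ t, η t = K / Real.sqrt (2 * S t) := fun t => hη t
  have hηpos : ∀ t, 0 < η t := fun t => by
    rw [hηval t]
    exact div_pos hK (Real.sqrt_pos.2 (by linarith [hSpos t]))
  set c : ℕ → ℝ := fun t => Real.sqrt (2 * S t) / (2 * K) with hc_def
  have hc0 : ∀ t, 0 ≤ c t := fun t =>
    div_nonneg (Real.sqrt_nonneg _) (by linarith)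
  have hcmono : ∀ s t : ℕ, s ≤ t → c s ≤ c t := by
    intro s t hst
    apply div_le_div_of_nonneg_right ?_ (by linarith)
    exact Real.sqrt_le_sqrt (by linarith [hSmono s t hst])
  have h2ηc : ∀ t, c t * (2 * η t) = 1 := by
    intro t
    have hs : (0:ℝ) < Real.sqrt (2 * S t) := Real.sqrt_pos.2 (by linarith [hSpos t])
    rw [hc_def, hηval t]
    dsimp only
    rw [show 2 * (K / Real.sqrt (2 * S t)) = (2 * K) / Real.sqrt (2 * S t) by ring,
      div_mul_div_comm, mul_comm (Real.sqrt (2 * S t)) (2 * K)]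
    exact div_self (ne_of_gt (mul_pos (by linarith) hs))
  -- squared diameter bound
  have hsq : ∀ a ∈ X, ∀ b ∈ X, ‖a - b‖ ^ 2 ≤ D ^ 2 := by
    intro a ha b hb
    nlinarith [hdiam a ha b hb, norm_nonneg (a - b)]
  -- per-step descent inequality
  have hb : ∀ t, ‖x (t+1) - u t‖ ^ 2 ≤
      ‖x t - u t‖ ^ 2 - 2 * η t * ⟪grad t, x t - u t⟫ + η t ^ 2 * G t := by
    intro t
    set y := x t - η t • grad t with hy_def
    have hproj : ⟪y - x (t+1), u t - x (t+1)⟫ ≤ 0 :=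
      my_proj_inner hXconv (hupdate t).1 (hupdate t).2 (u t) (hu t)
    have h1 : ‖x (t+1) - u t‖ ^ 2 ≤ ‖y - u t‖ ^ 2 := by
      have e : y - u t = (y - x (t+1)) + (x (t+1) - u t) := by abel
      rw [e, norm_add_sq_real]
      have : ⟪y - x (t+1), x (t+1) - u t⟫ = - ⟪y - x (t+1), u t - x (t+1)⟫ := by
        rw [show x (t+1) - u t = -(u t - x (t+1)) by abel, inner_neg_right]
      nlinarith [sq_nonneg ‖y - x (t+1)‖, this, hproj]
    have h2 : ‖y - u t‖ ^ 2 =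
        ‖x t - u t‖ ^ 2 - 2 * η t * ⟪grad t, x t - u t⟫ + η t ^ 2 * G t := by
      have e : y - u t = (x t - u t) - η t • grad t := by rw [hy_def]; abel
      rw [e, norm_sub_sq_real, real_inner_smul_right, real_inner_comm, norm_smul,
        mul_pow, Real.norm_eq_abs, sq_abs, hG_def]
      ring
    linarith
  -- per-step regret inequality
  have hstep : ∀ t, f t (x t) - f t (u t) ≤
      c t * (‖x t - u t‖ ^ 2 - ‖x (t+1) - u t‖ ^ 2) + η t * G t / 2 := by
    intro t
    have hI : f t (x t) - f t (u t) ≤ ⟪grad t, x t - u t⟫ := by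
      have := hsubgrad t (u t) (hu t)
      have e : ⟪grad t, u t - x t⟫ = - ⟪grad t, x t - u t⟫ := by
        rw [show u t - x t = -(x t - u t) by abel, inner_neg_right]
      linarith [this, e.ge, e.le]
    set I := ⟪grad t, x t - u t⟫
    have h1 : 2 * η t * I ≤ (‖x t - u t‖ ^ 2 - ‖x (t+1) - u t‖ ^ 2) + η t ^ 2 * G t := by
      linarith [hb t]
    have h2 := mul_le_mul_of_nonneg_left h1 (hc0 t)
    have h3 : c t * (2 * η t * I) = I := by linear_combination I * h2ηc t
    have h4 : c t * ((‖x t - u t‖ ^ 2 - ‖x (t+1) - u t‖ ^ 2) + η t ^ 2 * G t)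
        = c t * (‖x t - u t‖ ^ 2 - ‖x (t+1) - u t‖ ^ 2) + η t * G t / 2 := by
      linear_combination (η t * G t / 2) * h2ηc t
    linarith [h2, h3.ge, h3.le, h4.ge, h4.le, hI]
  -- comparator shift bound
  have hshift : ∀ t, ‖x (t+1) - u (t+1)‖ ^ 2 - ‖x (t+1) - u t‖ ^ 2 ≤
      2 * D * ‖u (t+1) - u t‖ := by
    intro t
    have htri : ‖x (t+1) - u (t+1)‖ ≤ ‖x (t+1) - u t‖ + ‖u (t+1) - u t‖ := by
      have e : x (t+1) - u (t+1) = (x (t+1) - u t) - (u (t+1) - u t) := by abel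
      rw [e]
      exact norm_sub_le _ _
    have hd1 : ‖x (t+1) - u (t+1)‖ ≤ D := hdiam _ (hupdate t).1 _ (hu (t+1))
    have hd2 : ‖x (t+1) - u t‖ ≤ D := hdiam _ (hupdate t).1 _ (hu t)
    nlinarith [htri, hd1, hd2, norm_nonneg (u (t+1) - u t), norm_nonneg (x (t+1) - u t),
      norm_nonneg (x (t+1) - u (t+1))]
  -- Abel sequence
  set A : ℕ → ℝ := fun t => if t ≤ T - 1 then ‖x t - u t‖ ^ 2 else ‖x T - u (T-1)‖ ^ 2
    with hA_def
  set p : ℕ → ℝ := fun t => if t < T - 1 then ‖u (t+1) - u t‖ else 0 with hp_def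
  have hA0 : ∀ t, 0 ≤ A t := by
    intro t; rw [hA_def]; dsimp only; split <;> positivity
  have hAM : ∀ t, A t ≤ D ^ 2 := by
    intro t; rw [hA_def]; dsimp only; split
    · exact hsq _ (hx t) _ (hu t)
    · exact hsq _ (hx T) _ (hu (T-1))
  have hp0 : ∀ t, 0 ≤ p t := by
    intro t; rw [hp_def]; dsimp only; split
    · positivity
    · exact le_refl 0
  have hAstep : ∀ t ∈ range T, ‖x t - u t‖ ^ 2 - ‖x (t+1) - u t‖ ^ 2 ≤
      (A t - A (t+1)) + 2 * D * p t := by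
    intro t ht
    rw [Finset.mem_range] at ht
    rw [hA_def, hp_def]; dsimp only
    by_cases h : t < T - 1
    · rw [if_pos (by omega), if_pos (by omega), if_pos h]
      linarith [hshift t]
    · have ht' : t = T - 1 := by omega
      rw [if_pos (by omega), if_neg (by omega), if_neg h]
      subst ht'
      rw [hT1]
      linarith
  -- combine per-step bounds
  have hsum : ∑ t ∈ range T, (f t (x t) - f t (u t)) ≤
      ∑ t ∈ range T, (c t * (A t - A (t+1)) + c (T-1) * (2 * D * p t) + η t * G t / 2) := by
    apply Finset.sum_le_sum
    intro t ht
    have h1 := hstep t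
    have h2 := mul_le_mul_of_nonneg_left (hAstep t ht) (hc0 t)
    have h3 : c t * (2 * D * p t) ≤ c (T-1) * (2 * D * p t) := by
      apply mul_le_mul_of_nonneg_right (hcmono t (T-1) (by rw [Finset.mem_range] at ht; omega))
      exact mul_nonneg (mul_nonneg (by norm_num) hD) (hp0 t)
    nlinarith [h1, h2, h3]
  rw [Finset.sum_add_distrib, Finset.sum_add_distrib] at hsum
  -- bound the three sums
  set R : ℝ := Real.sqrt (∑ t ∈ range T, G t) with hR_def
  have hR0 : 0 ≤ R := Real.sqrt_nonneg _
  have hST : S (T-1) = ∑ t ∈ range T, G t := by rw [hS_def]; dsimp only; rw [hT1]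
  have hterm1 : ∑ t ∈ range T, c t * (A t - A (t+1)) ≤ D ^ 2 * c (T-1) := by
    have := my_abel hA0 hAM hc0 hcmono (T-1)
    rwa [hT1] at this
  have hterm2 : ∑ t ∈ range T, c (T-1) * (2 * D * p t) ≤ 2 * D * P * c (T-1) := by
    have hps : ∑ t ∈ range T, p t ≤ P := by
      rw [← hT1, Finset.sum_range_succ]
      have hlast : p (T-1) = 0 := by rw [hp_def]; dsimp only; rw [if_neg (by omega)]
      have heq : ∑ t ∈ range (T-1), p t = ∑ t ∈ range (T-1), ‖u (t+1) - u t‖ := by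
        apply Finset.sum_congr rfl
        intro t ht
        rw [Finset.mem_range] at ht
        rw [hp_def]; dsimp only; rw [if_pos ht]
      rw [hlast, heq]
      linarith [hpath]
    have : ∑ t ∈ range T, c (T-1) * (2 * D * p t)
        = (2 * D * c (T-1)) * ∑ t ∈ range T, p t := by
      rw [Finset.mul_sum]; apply Finset.sum_congr rfl; intros; ring
    rw [this]
    have h1 : (2 * D * c (T-1)) * (∑ t ∈ range T, p t) ≤ (2 * D * c (T-1)) * P :=
      mul_le_mul_of_nonneg_left hps (mul_nonneg (mul_nonneg (by norm_num) hD) (hc0 (T-1)))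
    linarith [h1]
  have hterm3 : ∑ t ∈ range T, η t * G t / 2 ≤ K * R / Real.sqrt 2 := by
    have hrw : ∀ t, η t * G t / 2 = (K / (2 * Real.sqrt 2)) * (G t / Real.sqrt (S t)) := by
      intro t
      rw [hηval t]
      have h2S : Real.sqrt (2 * S t) = Real.sqrt 2 * Real.sqrt (S t) := Real.sqrt_mul (by norm_num) _
      have hs2 : (0:ℝ) < Real.sqrt 2 := by positivity
      have hsS : (0:ℝ) < Real.sqrt (S t) := Real.sqrt_pos.2 (hSpos t)
      rw [h2S]
      field_simp
    rw [Finset.sum_congr rfl (fun t _ => hrw t)]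
    rw [← Finset.mul_sum]
    have hsum2 := my_sum_div_sqrt hGpos T
    have hs2 : (0:ℝ) < Real.sqrt 2 := by positivity
    have h1 : (K / (2 * Real.sqrt 2)) * (∑ t ∈ range T, G t / Real.sqrt (S t))
        ≤ (K / (2 * Real.sqrt 2)) * (2 * R) := by
      apply mul_le_mul_of_nonneg_left _ (div_nonneg hK.le (by positivity))
      rw [hR_def]
      exact hsum2
    have h2 : (K / (2 * Real.sqrt 2)) * (2 * R) = K * R / Real.sqrt 2 := by
      field_simp
    linarith [h1, h2.le, h2.ge]
  -- final algebra
  have hc_eval : c (T-1) = Real.sqrt 2 * R / (2 * K) := by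
    rw [hc_def]; dsimp only
    rw [hST, Real.sqrt_mul (by norm_num : (0:ℝ) ≤ 2), ← hR_def]
  have hgoal : D ^ 2 * c (T-1) + 2 * D * P * c (T-1) + K * R / Real.sqrt 2 ≤
      (D + 1) * Real.sqrt (2 * (1 + P)) * R := by
    rw [hc_eval, show Real.sqrt (2 * (1 + P)) = Real.sqrt 2 * Q from
      Real.sqrt_mul (by norm_num) _]
    have hs2 : (0:ℝ) < Real.sqrt 2 := Real.sqrt_pos.2 (by norm_num)
    have hs22 : Real.sqrt 2 * Real.sqrt 2 = 2 := Real.mul_self_sqrt (by norm_num)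
    have hc'0 : 0 ≤ Real.sqrt 2 * R / (2 * K) :=
      div_nonneg (mul_nonneg hs2.le hR0) (by linarith)
    have hfac : D ^ 2 + 2 * D * P ≤ (D + 1) ^ 2 * (1 + P) := by nlinarith
    have h6 : (D ^ 2 + 2 * D * P) * (Real.sqrt 2 * R / (2 * K)) ≤
        ((D + 1) ^ 2 * (1 + P)) * (Real.sqrt 2 * R / (2 * K)) :=
      mul_le_mul_of_nonneg_right hfac hc'0
    have h7 : ((D + 1) ^ 2 * (1 + P)) * (Real.sqrt 2 * R / (2 * K)) =
        (D + 1) * Q * Real.sqrt 2 * R / 2 := by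
      rw [hK_def, ← hQ2]
      have hD1 : D + 1 ≠ 0 := by linarith
      have hQ0 : Q ≠ 0 := by linarith
      have hs22' : Real.sqrt 2 ^ 2 = 2 := Real.sq_sqrt (by norm_num)
      field_simp
    have h8 : K * R / Real.sqrt 2 = (D + 1) * Q * Real.sqrt 2 * R / 2 := by
      rw [hK_def, div_eq_div_iff (ne_of_gt hs2) (by norm_num : (2:ℝ) ≠ 0)]
      linear_combination (-((D + 1) * Q * R)) * hs22
    nlinarith [h6, h7, h8]
  calc ∑ t ∈ range T, (f t (x t) - f t (u t))
      ≤ _ := hsum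
    _ ≤ D ^ 2 * c (T-1) + 2 * D * P * c (T-1) + K * R / Real.sqrt 2 := by
        linarith [hterm1, hterm2, hterm3]
    _ ≤ (D + 1) * Real.sqrt (2 * (1 + P)) * R := hgoal
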